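/- Let A be a real n×n matrix that is semistable with a simple zero eigenvalue, with right eigenvector u and left eigenvector w normalized so that wᵀ u = 1, and let C be a real m×n matrix with C u = 0. Then the observability Gramian integral ∫_0^∞ exp(Aᵀ t) Cᵀ C exp(A t) dt converges entrywise, even though A is not Hurwitz. -/

import Mathlib

open MeasureTheory NormedSpace Set Matrix

section SemistableAux

attribute [local instance] Matrix.linftyOpNormedAddCommGroup Matrix.linftyOpNormedRing
  Matrix.linftyOpNormedAlgebra

variable {n m : ℕ}

namespace SemistableAux

theorem vecMulVec_mulVec' {R : Type*} [CommRing R] (a b v : Fin n → R) :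
    (vecMulVec a b).mulVec v = (b ⬝ᵥ v) • a := by
  ext i
  simp only [Matrix.mulVec, dotProduct, vecMulVec_apply, Pi.smul_apply, smul_eq_mul]
  rw [Finset.sum_mul]
  exact Finset.sum_congr rfl fun x _ => by ring

theorem mul_vecMulVec {R : Type*} [CommRing R] (M : Matrix (Fin m) (Fin n) R)
    (a b : Fin n → R) : M * vecMulVec a b = vecMulVec (M.mulVec a) b := by
  ext i j
  simp only [Matrix.mul_apply, vecMulVec_apply, Matrix.mulVec, dotProduct]
  rw [Finset.sum_mul]
  exact Finset.sum_congr rfl fun x _ => by ring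

theorem vecMulVec_mul {R : Type*} [CommRing R] (a : Fin m → R) (b : Fin n → R)
    (M : Matrix (Fin n) (Fin n) R) : vecMulVec a b * M = vecMulVec a (b ᵥ* M) := by
  ext i j
  simp only [Matrix.mul_apply, vecMulVec_apply, Matrix.vecMul, dotProduct]
  rw [Finset.mul_sum]
  exact Finset.sum_congr rfl fun x _ => by ring

theorem eig_of_mem_spectrum {M : Matrix (Fin n) (Fin n) ℂ} {μ : ℂ}
    (hμ : μ ∈ spectrum ℂ M) : ∃ v, v ≠ 0 ∧ M.mulVec v = μ • v := by
  rw [spectrum.mem_iff] at hμ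
  have hdet : (algebraMap ℂ (Matrix (Fin n) (Fin n) ℂ) μ - M).det = 0 := by
    by_contra h
    exact hμ ((Matrix.isUnit_iff_isUnit_det _).2 (isUnit_iff_ne_zero.2 h))
  obtain ⟨v, hvne, hveq⟩ := (Matrix.exists_mulVec_eq_zero_iff).2 hdet
  refine ⟨v, hvne, ?_⟩
  rw [Algebra.algebraMap_eq_smul_one, Matrix.sub_mulVec, Matrix.smul_mulVec,
    Matrix.one_mulVec, sub_eq_zero] at hveq
  exact hveq.symm

theorem mem_spectrum_of_eig {M : Matrix (Fin n) (Fin n) ℂ} {μ : ℂ} {v : Fin n → ℂ}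
    (hv0 : v ≠ 0) (hv : M.mulVec v = μ • v) : μ ∈ spectrum ℂ M := by
  rw [spectrum.mem_iff]
  intro hunit
  rw [Matrix.isUnit_iff_isUnit_det, isUnit_iff_ne_zero] at hunit
  apply hunit
  rw [← Matrix.exists_mulVec_eq_zero_iff]
  refine ⟨v, hv0, ?_⟩
  rw [Algebra.algebraMap_eq_smul_one, Matrix.sub_mulVec, Matrix.smul_mulVec,
    Matrix.one_mulVec, hv, sub_self]

theorem specB_neg {A : Matrix (Fin n) (Fin n) ℝ} {u w : Fin n → ℝ}
    (hmult : A.charpoly.rootMultiplicity 0 = 1)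
    (hspec : ∀ μ ∈ spectrum ℂ (A.map Complex.ofReal), μ ≠ 0 → μ.re < 0)
    (hu : A.mulVec u = 0) (hw : Aᵀ.mulVec w = 0) (hwu : w ⬝ᵥ u = 1) :
    ∀ μ ∈ spectrum ℂ ((A - vecMulVec u w).map Complex.ofReal), μ.re < 0 := by
  intro μ hμ
  set u' : Fin n → ℂ := fun i => (u i : ℂ) with hu'
  set w' : Fin n → ℂ := fun i => (w i : ℂ) with hw'
  set A' : Matrix (Fin n) (Fin n) ℂ := A.map Complex.ofReal with hA'
  have hmapB : (A - vecMulVec u w).map Complex.ofReal = A' - vecMulVec u' w' := by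
    ext i j
    simp [Matrix.map_apply, Matrix.sub_apply, vecMulVec_apply, hu', hw', hA']
  rw [hmapB] at hμ
  have hu'A : A'.mulVec u' = 0 := by
    ext i
    have := RingHom.map_mulVec Complex.ofRealHom A u i
    simp only [hu] at this
    simp only [Pi.zero_apply, map_zero] at this ⊢
    exact this.symm
  have hw'A : w' ᵥ* A' = 0 := by
    have hwA : w ᵥ* A = 0 := by rw [← Matrix.mulVec_transpose, hw]
    ext i
    have := RingHom.map_vecMul Complex.ofRealHom A w i
    simp only [hwA] at this
    simp only [Pi.zero_apply, map_zero] at this ⊢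
    exact this.symm
  have hwu' : w' ⬝ᵥ u' = 1 := by
    simp only [dotProduct, hu', hw', ← Complex.ofReal_mul, ← Complex.ofReal_sum]
    rw [show ∑ i, w i * u i = w ⬝ᵥ u from rfl, hwu, Complex.ofReal_one]
  obtain ⟨v, hv0, hv⟩ := eig_of_mem_spectrum hμ
  have hBv : A'.mulVec v - (w' ⬝ᵥ v) • u' = μ • v := by
    rw [← hv, Matrix.sub_mulVec, vecMulVec_mulVec']
  have hkey : (μ + 1) * (w' ⬝ᵥ v) = 0 := by
    have h1 : w' ⬝ᵥ (A'.mulVec v - (w' ⬝ᵥ v) • u') = w' ⬝ᵥ (μ • v) := by rw [hBv]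
    rw [dotProduct_sub, dotProduct_smul, dotProduct_mulVec, hw'A,
      zero_dotProduct, dotProduct_smul, hwu', zero_sub, smul_eq_mul,
      smul_eq_mul, mul_one] at h1
    have : -(w' ⬝ᵥ v) = μ * (w' ⬝ᵥ v) := h1
    ring_nf
    linear_combination -this
  rcases eq_or_ne μ (-1) with rfl | hμ1
  · norm_num
  have hwv : w' ⬝ᵥ v = 0 := by
    rcases mul_eq_zero.1 hkey with h | h
    · exact absurd (by linear_combination h) hμ1
    · exact h
  have hAv : A'.mulVec v = μ • v := by
    rw [← hBv, hwv, zero_smul, sub_zero]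
  rcases eq_or_ne μ 0 with rfl | hμ0
  · exfalso
    rw [zero_smul] at hAv
    have hu'0 : u' ≠ 0 := by
      intro h
      rw [h, dotProduct_zero] at hwu'
      exact one_ne_zero hwu'.symm
    have hli : LinearIndependent ℂ ![u', v] := by
      rw [LinearIndependent.pair_iff]
      intro s t hst
      have hdot : w' ⬝ᵥ (s • u' + t • v) = 0 := by rw [hst, dotProduct_zero]
      rw [dotProduct_add, dotProduct_smul, dotProduct_smul, hwu', hwv,
        smul_eq_mul, smul_eq_mul, mul_one, mul_zero, add_zero] at hdot
      subst hdot
      rw [zero_smul, zero_add] at hst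
      rcases smul_eq_zero.1 hst with h | h
      · exact ⟨rfl, h⟩
      · exact absurd h hv0
    set f : Module.End ℂ (Fin n → ℂ) := Matrix.toLin' A' with hf
    have hspan : Submodule.span ℂ (Set.range ![u', v]) ≤ f.maxGenEigenspace 0 := by
      rw [Submodule.span_le]
      rintro x ⟨i, rfl⟩
      have hmem : ∀ y : Fin n → ℂ, A'.mulVec y = 0 → y ∈ f.maxGenEigenspace 0 := by
        intro y hy
        rw [Module.End.mem_genEigenspace_top]
        refine ⟨1, ?_⟩
        simp only [pow_one, LinearMap.mem_ker, zero_smul, sub_zero, hf]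
        rw [Matrix.toLin'_apply, hy]
      fin_cases i
      · exact hmem u' hu'A
      · exact hmem v hAv
    have h2le : 2 ≤ Module.finrank ℂ (f.maxGenEigenspace 0) := by
      have := Submodule.finrank_mono hspan
      rw [finrank_span_eq_card hli] at this
      simpa using this
    have hfr : Module.finrank ℂ (f.maxGenEigenspace 0) = 1 := by
      rw [LinearMap.finrank_maxGenEigenspace_zero_eq]
      have hcp : f.charpoly = A'.charpoly := by
        rw [← LinearMap.charpoly_toMatrix f (Pi.basisFun ℂ (Fin n)),
          LinearMap.toMatrix_eq_toMatrix', hf, LinearMap.toMatrix'_toLin']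
      rw [hcp]
      have hmap : A'.charpoly = A.charpoly.map Complex.ofRealHom := by
        rw [hA', ← Matrix.charpoly_map]
        rfl
      have hne : A.charpoly ≠ 0 := A.charpoly_monic.ne_zero
      have hne' : A.charpoly.map Complex.ofRealHom ≠ 0 := by
        intro h
        apply hne (Polynomial.map_injective Complex.ofRealHom
          (fun a b hab => Complex.ofReal_injective hab) ?_)
        rw [h, Polynomial.map_zero]
      have hntd : (A.charpoly.map Complex.ofRealHom).natTrailingDegree
          = A.charpoly.natTrailingDegree := by
        apply le_antisymm
        · apply Polynomial.natTrailingDegree_le_of_ne_zero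
          rw [Polynomial.coeff_map]
          simpa using Polynomial.coeff_natTrailingDegree_ne_zero.2 hne
        · apply Polynomial.natTrailingDegree_le_of_ne_zero
          intro h
          have := Polynomial.coeff_natTrailingDegree_ne_zero.2 hne'
          rw [Polynomial.coeff_map] at this
          exact this (by rw [h, map_zero])
      rw [hmap, hntd, ← Polynomial.rootMultiplicity_eq_natTrailingDegree', hmult]
    omega
  · exact hspec μ (mem_spectrum_of_eig hv0 hAv) hμ0

theorem exp_map_ofReal (M : Matrix (Fin n) (Fin n) ℝ) (t : ℝ) :
    (exp (t • M)).map Complex.ofReal = exp ((t : ℂ) • M.map Complex.ofReal) := by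
  have hcont : Continuous (⇑(Complex.ofRealHom.mapMatrix :
      Matrix (Fin n) (Fin n) ℝ →+* Matrix (Fin n) (Fin n) ℂ)) := by
    let L : Matrix (Fin n) (Fin n) ℝ →ₗ[ℝ] Matrix (Fin n) (Fin n) ℂ :=
      { toFun := fun X => X.map Complex.ofReal
        map_add' := fun X Y => by ext i j; simp [Matrix.map_apply]
        map_smul' := fun r X => by ext i j; simp [Matrix.map_apply, Complex.real_smul] }
    exact L.continuous_of_finiteDimensional
  have h1 := map_exp (Complex.ofRealHom.mapMatrix :
      Matrix (Fin n) (Fin n) ℝ →+* Matrix (Fin n) (Fin n) ℂ) hcont (t • M)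
  have h2 : (Complex.ofRealHom.mapMatrix (t • M) : Matrix (Fin n) (Fin n) ℂ)
      = (t : ℂ) • M.map Complex.ofReal := by
    ext i j
    simp [RingHom.mapMatrix_apply, Matrix.map_apply, Matrix.smul_apply, Complex.real_smul]
  have h3 : (exp : Matrix (Fin n) (Fin n) ℂ → Matrix (Fin n) (Fin n) ℂ) = exp :=
    rfl
  calc (exp (t • M)).map Complex.ofReal
      = Complex.ofRealHom.mapMatrix (exp (t • M)) := rfl
    _ = exp (Complex.ofRealHom.mapMatrix (t • M)) := h1
    _ = exp ((t : ℂ) • M.map Complex.ofReal) := by rw [h2, h3]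

theorem mul_exp_eq_of_mul_eq_zero (C : Matrix (Fin m) (Fin n) ℝ) (X : Matrix (Fin n) (Fin n) ℝ)
    (h : C * X = 0) : C * exp X = C := by
  let L : Matrix (Fin n) (Fin n) ℝ →ₗ[ℝ] Matrix (Fin m) (Fin n) ℝ :=
    { toFun := fun Y => C * Y
      map_add' := fun a b => Matrix.mul_add _ _ _
      map_smul' := fun c a => (Matrix.mul_smul _ _ _) }
  have h2 : C * exp X = L.toContinuousLinearMap (exp X) := rfl
  rw [h2, exp_eq_tsum ℝ, L.toContinuousLinearMap.map_tsum (expSeries_summable' (𝕂 := ℝ) X)]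
  have h3 : ∀ k : ℕ, k ≠ 0 → L.toContinuousLinearMap ((k.factorial : ℝ)⁻¹ • X ^ k) = 0 := by
    intro k hk
    obtain ⟨j, rfl⟩ := Nat.exists_eq_succ_of_ne_zero hk
    have hX : C * X ^ (j + 1) = 0 := by
      rw [pow_succ', ← Matrix.mul_assoc, h, Matrix.zero_mul]
    have : L.toContinuousLinearMap (X ^ (j + 1)) = 0 := hX
    rw [_root_.map_smul, this, smul_zero]
  rw [tsum_eq_single 0 h3]
  simp only [pow_zero, Nat.factorial_zero, Nat.cast_one, inv_one, one_smul]
  show C * (1 : Matrix (Fin n) (Fin n) ℝ) = C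
  exact Matrix.mul_one C

theorem exp_mulVec_eq_tsum (B : Matrix (Fin n) (Fin n) ℂ) (x : Fin n → ℂ) :
    (exp B).mulVec x = ∑' k : ℕ, (k.factorial : ℂ)⁻¹ • ((B ^ k).mulVec x) := by
  let L : Matrix (Fin n) (Fin n) ℂ →ₗ[ℂ] (Fin n → ℂ) :=
    { toFun := fun Y => Y.mulVec x
      map_add' := fun a b => Matrix.add_mulVec _ _ _
      map_smul' := fun c a => by simpa using Matrix.smul_mulVec c a x }
  have h2 : (exp B).mulVec x = L.toContinuousLinearMap (exp B) := rfl
  rw [h2, exp_eq_tsum ℂ, L.toContinuousLinearMap.map_tsum (expSeries_summable' (𝕂 := ℂ) B)]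
  refine tsum_congr fun k => ?_
  rw [_root_.map_smul]
  rfl

theorem exp_smul_add_scalar (z c : ℂ) (N : Matrix (Fin n) (Fin n) ℂ) :
    exp (z • N + c • (1 : Matrix (Fin n) (Fin n) ℂ)) = Complex.exp c • exp (z • N) := by
  rw [Matrix.exp_add_of_commute _ _ ((Commute.one_right (z • N)).smul_right c)]
  have h1 : (c • (1 : Matrix (Fin n) (Fin n) ℂ)) = algebraMap ℂ _ c :=
    (Algebra.algebraMap_eq_smul_one c).symm
  rw [h1]
  erw [← map_exp (algebraMap ℂ (Matrix (Fin n) (Fin n) ℂ)) (continuous_algebraMap _ _)]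
  rw [← Complex.exp_eq_exp_ℂ, Algebra.algebraMap_eq_smul_one, mul_smul_comm, mul_one]

theorem mulVec_exp_decay (B : Matrix (Fin n) (Fin n) ℂ)
    (hs : ∀ μ ∈ spectrum ℂ B, μ.re < 0) (x : Fin n → ℂ) :
    ∃ K ε : ℝ, 0 < ε ∧ 0 ≤ K ∧ ∀ t : ℝ, 0 ≤ t →
      ‖(exp ((t : ℂ) • B)).mulVec x‖ ≤ K * Real.exp (-ε * t) := by
  let f : Module.End ℂ (Fin n → ℂ) := Matrix.toLin' B
  have hx : x ∈ ⨆ μ, f.maxGenEigenspace μ := by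
    rw [Module.End.iSup_maxGenEigenspace_eq_top]; trivial
  refine Submodule.iSup_induction (motive := fun v => ∃ K ε : ℝ, 0 < ε ∧ 0 ≤ K ∧ ∀ t : ℝ, 0 ≤ t →
      ‖(exp ((t : ℂ) • B)).mulVec v‖ ≤ K * Real.exp (-ε * t)) _ hx ?_ ?_ ?_
  · intro μ y hy
    rcases eq_or_ne y 0 with rfl | hy0
    · exact ⟨0, 1, one_pos, le_refl 0, fun t ht => by simp [Matrix.mulVec_zero]⟩
    obtain ⟨k, hk⟩ := Module.End.mem_genEigenspace_top.mp hy
    have hμspec : μ ∈ spectrum ℂ B := by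
      have h1 : f.HasGenEigenvalue μ k := by
        rw [Module.End.hasGenEigenvalue_iff]
        intro hbot
        have h2 : y ∈ f.genEigenspace μ k :=
          Module.End.mem_genEigenspace_nat.mpr hk
        rw [hbot, Submodule.mem_bot] at h2
        exact hy0 h2
      have h3 := Module.End.hasEigenvalue_iff_mem_spectrum.mp
        (Module.End.hasEigenvalue_of_hasGenEigenvalue h1)
      have e : Matrix.toLinAlgEquiv' B = f := by
        apply LinearMap.ext; intro v
        rw [Matrix.toLinAlgEquiv'_apply]; rfl
      rw [← e, AlgEquiv.spectrum_eq] at h3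
      exact h3
    have hre : μ.re < 0 := hs μ hμspec
    set ε : ℝ := -μ.re / 2 with hε_def
    have hε : 0 < ε := by simp [hε_def]; linarith
    set N : Matrix (Fin n) (Fin n) ℂ := B - μ • 1 with hN
    have hNk : (N ^ k).mulVec y = 0 := by
      have h4 : Matrix.toLinAlgEquiv' (N ^ k) y = 0 := by
        rw [map_pow, hN, map_sub, _root_.map_smul, _root_.map_one]
        exact hk
      rwa [Matrix.toLinAlgEquiv'_apply] at h4
    set v : ℕ → (Fin n → ℂ) := fun j => (N ^ j).mulVec y with hv
    set K : ℝ := ∑ j ∈ Finset.range k, ε⁻¹ ^ j * ‖v j‖ with hK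
    have hK0 : 0 ≤ K := Finset.sum_nonneg fun j _ =>
      mul_nonneg (pow_nonneg (inv_nonneg.2 hε.le) _) (norm_nonneg _)
    refine ⟨K, ε, hε, hK0, fun t ht => ?_⟩
    have hBt : (t : ℂ) • B = (t : ℂ) • N + ((t : ℂ) * μ) • 1 := by
      rw [hN, smul_sub, ← smul_smul, sub_add_cancel]
    rw [hBt, exp_smul_add_scalar, Matrix.smul_mulVec, norm_smul]
    have habs : ‖Complex.exp ((t : ℂ) * μ)‖ = Real.exp (t * μ.re) := by
      rw [Complex.norm_exp, Complex.re_ofReal_mul]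
    rw [habs, exp_mulVec_eq_tsum]
    have hterm : ∀ j : ℕ, (((t : ℂ) • N) ^ j).mulVec y = ((t : ℂ) ^ j) • v j := by
      intro j; rw [smul_pow, Matrix.smul_mulVec]
    have hzero : ∀ j ∉ Finset.range k,
        ((j.factorial : ℂ)⁻¹ • (((t : ℂ) • N) ^ j).mulVec y) = (0 : Fin n → ℂ) := by
      intro j hj
      rw [Finset.mem_range, not_lt] at hj
      have hvj : v j = 0 := by
        have h5 : N ^ j = N ^ (j - k) * N ^ k := by rw [← pow_add]; congr 1; omega
        rw [hv]; dsimp only; rw [h5, ← Matrix.mulVec_mulVec, hNk, Matrix.mulVec_zero]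
      rw [hterm j, hvj, smul_zero, smul_zero]
    rw [tsum_eq_sum hzero]
    have hsum : ‖∑ j ∈ Finset.range k, (j.factorial : ℂ)⁻¹ • (((t : ℂ) • N) ^ j).mulVec y‖
        ≤ ∑ j ∈ Finset.range k, (ε⁻¹ ^ j * ‖v j‖) * Real.exp (ε * t) := by
      refine (norm_sum_le _ _).trans (Finset.sum_le_sum fun j _ => ?_)
      rw [hterm j, norm_smul, norm_smul]
      have h6 : ‖((j.factorial : ℂ))⁻¹‖ = ((j.factorial : ℝ))⁻¹ := by
        rw [norm_inv]; norm_num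
      have h7 : ‖(t : ℂ) ^ j‖ = t ^ j := by
        rw [norm_pow, Complex.norm_real, Real.norm_of_nonneg ht]
      rw [h6, h7]
      have h8 : (ε * t) ^ j / (j.factorial : ℝ) ≤ Real.exp (ε * t) := by
        have := Real.sum_le_exp_of_nonneg (mul_nonneg hε.le ht) (j + 1)
        refine le_trans ?_ this
        exact Finset.single_le_sum (f := fun i => (ε * t) ^ i / (i.factorial : ℝ))
          (fun i _ => div_nonneg (pow_nonneg (mul_nonneg hε.le ht) _) (by positivity))
          (Finset.self_mem_range_succ j)
      have h9 : (j.factorial : ℝ)⁻¹ * t ^ j ≤ ε⁻¹ ^ j * Real.exp (ε * t) := by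
        have h10 : t ^ j = ε⁻¹ ^ j * (ε * t) ^ j := by
          rw [mul_pow, ← mul_assoc, ← mul_pow, inv_mul_cancel₀ hε.ne', one_pow, one_mul]
        rw [h10, ← mul_assoc, mul_comm ((j.factorial : ℝ))⁻¹, mul_assoc]
        refine mul_le_mul_of_nonneg_left ?_ (pow_nonneg (inv_nonneg.2 hε.le) _)
        rw [inv_mul_eq_div]
        exact h8
      calc ((j.factorial : ℝ))⁻¹ * (t ^ j * ‖v j‖)
          = ((j.factorial : ℝ))⁻¹ * t ^ j * ‖v j‖ := by ring
        _ ≤ ε⁻¹ ^ j * Real.exp (ε * t) * ‖v j‖ :=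
            mul_le_mul_of_nonneg_right h9 (norm_nonneg _)
        _ = ε⁻¹ ^ j * ‖v j‖ * Real.exp (ε * t) := by ring
    rw [← Finset.sum_mul] at hsum
    calc Real.exp (t * μ.re) *
        ‖∑ j ∈ Finset.range k, (j.factorial : ℂ)⁻¹ • (((t : ℂ) • N) ^ j).mulVec y‖
        ≤ Real.exp (t * μ.re) * (K * Real.exp (ε * t)) :=
          mul_le_mul_of_nonneg_left hsum (Real.exp_nonneg _)
      _ = K * Real.exp (-ε * t) := by
          rw [← mul_assoc, mul_comm (Real.exp (t * μ.re)) K, mul_assoc, ← Real.exp_add]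
          congr 2
          rw [hε_def]; ring
  · exact ⟨0, 1, one_pos, le_refl 0, fun t ht => by simp [Matrix.mulVec_zero]⟩
  · rintro a b ⟨K1, ε1, hε1, hK1, h1⟩ ⟨K2, ε2, hε2, hK2, h2⟩
    refine ⟨K1 + K2, min ε1 ε2, lt_min hε1 hε2, by linarith, fun t ht => ?_⟩
    rw [Matrix.mulVec_add]
    refine (norm_add_le _ _).trans ?_
    have e1 : Real.exp (-ε1 * t) ≤ Real.exp (-(min ε1 ε2) * t) := by
      apply Real.exp_le_exp.2; nlinarith [min_le_left ε1 ε2]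
    have e2 : Real.exp (-ε2 * t) ≤ Real.exp (-(min ε1 ε2) * t) := by
      apply Real.exp_le_exp.2; nlinarith [min_le_right ε1 ε2]
    calc ‖(exp ((t : ℂ) • B)).mulVec a‖ + ‖(exp ((t : ℂ) • B)).mulVec b‖
        ≤ K1 * Real.exp (-ε1 * t) + K2 * Real.exp (-ε2 * t) := add_le_add (h1 t ht) (h2 t ht)
      _ ≤ K1 * Real.exp (-(min ε1 ε2) * t) + K2 * Real.exp (-(min ε1 ε2) * t) :=
          add_le_add (mul_le_mul_of_nonneg_left e1 hK1) (mul_le_mul_of_nonneg_left e2 hK2)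
      _ = (K1 + K2) * Real.exp (-(min ε1 ε2) * t) := by ring

theorem exp_smul_continuous (M : Matrix (Fin n) (Fin n) ℝ) :
    Continuous fun t : ℝ => exp (t • M) := by
  exact exp_continuous.comp (continuous_id.smul continuous_const)

end SemistableAux

end SemistableAux

open SemistableAux in
/-- If `A` is semistable with a simple zero eigenvalue, with right eigenvector `u` and left
eigenvector `w` normalized so `wᵀ u = 1`, and `C u = 0`, then the observability Gramian
integral `∫_0^∞ exp(Aᵀ t) Cᵀ C exp(A t) dt` converges entrywise, even though `A` is not
Hurwitz. -/
theorem semistable_obsGram_integrable {n m : ℕ} (A : Matrix (Fin n) (Fin n) ℝ)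
    (u w : Fin n → ℝ)
    (hmult : A.charpoly.rootMultiplicity 0 = 1)
    (hspec : ∀ μ ∈ spectrum ℂ (A.map Complex.ofReal), μ ≠ 0 → μ.re < 0)
    (hu : A.mulVec u = 0) (hw : Aᵀ.mulVec w = 0) (hwu : w ⬝ᵥ u = 1)
    (C : Matrix (Fin m) (Fin n) ℝ) (hC : C.mulVec u = 0) :
    ∀ i j, IntegrableOn
      (fun t : ℝ => (exp (t • Aᵀ) * Cᵀ * C * exp (t • A)) i j) (Ici 0) := by
  intro i j
  set P : Matrix (Fin n) (Fin n) ℝ := vecMulVec u w with hP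
  set B : Matrix (Fin n) (Fin n) ℝ := A - P with hB
  have hwA : w ᵥ* A = 0 := by rw [← Matrix.mulVec_transpose, hw]
  have hAP : A * P = 0 := by
    rw [hP, SemistableAux.mul_vecMulVec, hu]
    ext a b; simp [vecMulVec_apply]
  have hPA : P * A = 0 := by
    rw [hP, SemistableAux.vecMulVec_mul, hwA]
    ext a b; simp [vecMulVec_apply]
  have hPu : P.mulVec u = u := by rw [hP, vecMulVec_mulVec', hwu, one_smul]
  have hPP : P * P = P := by rw [hP, SemistableAux.mul_vecMulVec, ← hP, hPu]
  have hCP : C * P = 0 := by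
    rw [hP, SemistableAux.mul_vecMulVec, hC]
    ext a b; simp [vecMulVec_apply]
  have hPB : P * B = -P := by rw [hB, Matrix.mul_sub, hPA, hPP, zero_sub]
  have hBP : B * P = -P := by rw [hB, Matrix.sub_mul, hAP, hPP, zero_sub]
  have hcomm : Commute P B := by rw [Commute, SemiconjBy, hPB, hBP]
  have hCE : ∀ t : ℝ, C * exp (t • A) = C * exp (t • B) := by
    intro t
    have hA_eq : t • A = t • P + t • B := by
      rw [← smul_add, hB, add_sub_cancel]
    rw [hA_eq, Matrix.exp_add_of_commute _ _ ((hcomm.smul_left t).smul_right t),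
      ← Matrix.mul_assoc,
      mul_exp_eq_of_mul_eq_zero C (t • P) (by rw [Matrix.mul_smul, hCP, smul_zero])]
  -- complexification
  set B' : Matrix (Fin n) (Fin n) ℂ := B.map Complex.ofReal with hB'
  have hspecB' : ∀ μ ∈ spectrum ℂ B', μ.re < 0 := by
    rw [hB', hB, hP]
    exact specB_neg hmult hspec hu hw hwu
  set C' : Matrix (Fin m) (Fin n) ℂ := C.map Complex.ofReal with hC'
  obtain ⟨Ki, εi, hεi, hKi, hdi⟩ := mulVec_exp_decay B' hspecB' (Pi.single i 1)
  obtain ⟨Kj, εj, hεj, hKj, hdj⟩ := mulVec_exp_decay B' hspecB' (Pi.single j 1)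
  obtain ⟨c, hc0, hcb⟩ : ∃ c : ℝ, 0 ≤ c ∧ ∀ y : Fin n → ℂ, ‖C'.mulVec y‖ ≤ c * ‖y‖ := by
    let L := (Matrix.mulVecLin C').toContinuousLinearMap
    exact ⟨‖L‖, norm_nonneg L, fun y => L.le_opNorm y⟩
  -- the function and its bound
  set M0 : ℝ := (m : ℝ) * ((c * Ki) * (c * Kj)) with hM0
  have hM00 : 0 ≤ M0 := by positivity
  have key : ∀ t : ℝ, 0 ≤ t →
      |(exp (t • Aᵀ) * Cᵀ * C * exp (t • A)) i j| ≤ M0 * Real.exp (-(εi + εj) * t) := by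
    intro t ht
    have hEtrans : exp (t • Aᵀ) = (exp (t • A))ᵀ := by
      rw [← Matrix.transpose_smul, Matrix.exp_transpose]
    have hprod : exp (t • Aᵀ) * Cᵀ * C * exp (t • A)
        = (C * exp (t • A))ᵀ * (C * exp (t • A)) := by
      rw [hEtrans, Matrix.transpose_mul, Matrix.mul_assoc]
    rw [hprod, hCE t]
    set X : Matrix (Fin m) (Fin n) ℝ := C * exp (t • B) with hX
    have hentry : (Xᵀ * X) i j = ∑ k : Fin m, X k i * X k j := by
      simp [Matrix.mul_apply, Matrix.transpose_apply]
    rw [hentry]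
    -- bound on entries of X
    have hXmap : X.map Complex.ofReal = C' * exp ((t : ℂ) • B') := by
      have h5 : (C * exp (t • B)).map Complex.ofReal
          = (C.map Complex.ofReal) * ((exp (t • B)).map Complex.ofReal) :=
        Matrix.map_mul (L := C) (M := exp (t • B)) (f := Complex.ofRealHom)
      rw [hX, h5, exp_map_ofReal, ← hC', ← hB']
    have hXb : ∀ (k : Fin m) (l : Fin n) (Kl εl : ℝ), 0 ≤ Kl →
        (∀ s : ℝ, 0 ≤ s → ‖(exp ((s : ℂ) • B')).mulVec (Pi.single l 1)‖ ≤
          Kl * Real.exp (-εl * s)) →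
        |X k l| ≤ c * Kl * Real.exp (-εl * t) := by
      intro k l Kl εl hKl0 hdl
      have h1 : ((X.map Complex.ofReal) k l : ℂ) = (X k l : ℂ) := rfl
      have h2 : (X.map Complex.ofReal) k l
          = ((C' * exp ((t : ℂ) • B')).mulVec (Pi.single l 1)) k := by
        rw [hXmap, Matrix.mulVec_single_one]
        rfl
      have h3 : ((C' * exp ((t : ℂ) • B')).mulVec (Pi.single l 1))
          = C'.mulVec ((exp ((t : ℂ) • B')).mulVec (Pi.single l 1)) := by
        rw [Matrix.mulVec_mulVec]
      have h4 : |X k l| = ‖((C'.mulVec ((exp ((t : ℂ) • B')).mulVec (Pi.single l 1))) k)‖ := by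
        rw [← h3, ← h2, h1]
        simp [Complex.norm_real]
      rw [h4]
      calc ‖(C'.mulVec ((exp ((t : ℂ) • B')).mulVec (Pi.single l 1))) k‖
          ≤ ‖C'.mulVec ((exp ((t : ℂ) • B')).mulVec (Pi.single l 1))‖ :=
            norm_le_pi_norm _ k
        _ ≤ c * ‖(exp ((t : ℂ) • B')).mulVec (Pi.single l 1)‖ := hcb _
        _ ≤ c * (Kl * Real.exp (-εl * t)) :=
            mul_le_mul_of_nonneg_left (hdl t ht) hc0
        _ = c * Kl * Real.exp (-εl * t) := by ring
    calc |∑ k : Fin m, X k i * X k j| ≤ ∑ k : Fin m, |X k i * X k j| :=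
          Finset.abs_sum_le_sum_abs _ _
      _ ≤ ∑ _k : Fin m, (c * Ki * Real.exp (-εi * t)) * (c * Kj * Real.exp (-εj * t)) := by
          refine Finset.sum_le_sum fun k _ => ?_
          rw [abs_mul]
          exact mul_le_mul (hXb k i Ki εi hKi hdi) (hXb k j Kj εj hKj hdj)
            (abs_nonneg _) (by positivity)
      _ = M0 * Real.exp (-(εi + εj) * t) := by
          rw [Finset.sum_const, Finset.card_univ, Fintype.card_fin, nsmul_eq_mul, hM0,
            show (-(εi + εj) * t) = (-εi * t) + (-εj * t) by ring, Real.exp_add]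
          ring
  have hcont : Continuous fun t : ℝ => (exp (t • Aᵀ) * Cᵀ * C * exp (t • A)) i j := by
    have h1 : Continuous fun t : ℝ => exp (t • Aᵀ) * Cᵀ * C * exp (t • A) := by
      exact (((exp_smul_continuous Aᵀ).matrix_mul continuous_const).matrix_mul
        continuous_const).matrix_mul (exp_smul_continuous A)
    exact h1.matrix_elem i j
  have hgint : IntegrableOn (fun t : ℝ => M0 * Real.exp (-(εi + εj) * t)) (Ici 0) := by
    rw [integrableOn_Ici_iff_integrableOn_Ioi]
    exact (exp_neg_integrableOn_Ioi 0 (by linarith)).const_mul M0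
  refine Integrable.mono' hgint (hcont.aestronglyMeasurable.restrict) ?_
  rw [ae_restrict_iff' measurableSet_Ici]
  exact ae_of_all _ fun t ht => by
    rw [Real.norm_eq_abs]
    exact key t ht
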